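/- Let p be a nonzero real number and (a_i)_{i≥1} a sequence of positive reals such that the continued fraction (1/p)/1 - (p/a_1)/1 + (p/a_1)/1 - (1/(p a_2))/1 + (1/(p a_2))/1 - (p/a_3)/1 + (p/a_3)/1 - ... converges. Then the continued fraction with quasi-periodic partial quotients [0; p, -a_1/p^2, -p, a_2, p, -a_3/p^2, -p, a_4, ...] (period pattern p, -a_{2n-1}/p^2, -p, a_{2n}) equals 1/p + [0; a_1, a_2, a_3, ...]. -/

import Mathlib

open Filter Topology

/-- Canonical numerators of the continued fraction `b₀ + K(aₙ/bₙ)`,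
shifted so that `CFnum pa pb (n+1)` is the classical `Aₙ` (and `CFnum pa pb 0 = A₋₁ = 1`). -/
def CFnum (pa pb : ℕ → ℝ) : ℕ → ℝ
  | 0 => 1
  | 1 => pb 0
  | n + 2 => pb (n+1) * CFnum pa pb (n+1) + pa (n+1) * CFnum pa pb n

/-- Canonical denominators, shifted as in `CFnum`. -/
def CFden (pa pb : ℕ → ℝ) : ℕ → ℝ
  | 0 => 0
  | 1 => 1
  | n + 2 => pb (n+1) * CFden pa pb (n+1) + pa (n+1) * CFden pa pb n

/-- The continued fraction `b₀ + K(aₙ/bₙ)` converges to `x`. -/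
def CFConvTo (pa pb : ℕ → ℝ) (x : ℝ) : Prop :=
  Tendsto (fun n => CFnum pa pb (n+1) / CFden pa pb (n+1)) atTop (𝓝 x)

theorem stmt9 (p : ℝ) (hp : p ≠ 0) (a : ℕ → ℝ) (ha : ∀ n, 1 ≤ n → 0 < a n)
    (pa1 : ℕ → ℝ)
    (h1 : pa1 1 = 1/p)
    (h2 : ∀ m, 1 ≤ m → pa1 (4*m-2) = -(p / a (2*m-1)))
    (h3 : ∀ m, 1 ≤ m → pa1 (4*m-1) = p / a (2*m-1))
    (h4 : ∀ m, 1 ≤ m → pa1 (4*m) = -(1/(p * a (2*m))))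
    (h5 : ∀ m, 1 ≤ m → pa1 (4*m+1) = 1/(p * a (2*m)))
    (hconv : ∃ x, CFConvTo pa1 (fun n => if n = 0 then 0 else 1) x)
    (pb2 : ℕ → ℝ) (hpb2_0 : pb2 0 = 0)
    (hq1 : ∀ n, n % 4 = 1 → pb2 n = p)
    (hq2 : ∀ n, 1 ≤ n → n % 4 = 2 → pb2 n = -(a (n/2) / p^2))
    (hq3 : ∀ n, n % 4 = 3 → pb2 n = -p)
    (hq4 : ∀ n, 1 ≤ n → n % 4 = 0 → pb2 n = a (n/2)) :
    ∃ y : ℝ,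
      CFConvTo (fun _ => 1) (fun n => if n = 0 then 0 else a n) y ∧
      CFConvTo (fun _ => 1) pb2 (1/p + y) := by
  obtain ⟨x, hx⟩ := hconv
  set b1 : ℕ → ℝ := fun n => if n = 0 then 0 else 1 with hb1def
  set b3 : ℕ → ℝ := fun n => if n = 0 then 0 else a n with hb3def
  set N : ℕ → ℝ := CFnum pa1 b1 with hNdef
  set D : ℕ → ℝ := CFden pa1 b1 with hDdef
  set P : ℕ → ℝ := CFnum (fun _ => 1) b3 with hPdef
  set Q : ℕ → ℝ := CFden (fun _ => 1) b3 with hQdef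
  have ha' : ∀ n, 1 ≤ n → a n ≠ 0 := fun n hn => (ha n hn).ne'
  have hb1v : ∀ k, b1 (k+1) = 1 := fun k => by simp [hb1def]
  have hb3v : ∀ k, b3 (k+1) = a (k+1) := fun k => by simp [hb3def]
  -- pairing: pa1 (2k+1) = - pa1 (2k) for k ≥ 1
  have pair : ∀ k, 1 ≤ k → pa1 (2*k+1) = -pa1 (2*k) := by
    intro k hk
    rcases Nat.even_or_odd k with ⟨m, hm⟩ | ⟨m, hm⟩
    · have hm1 : 1 ≤ m := by omega
      have e1 : 2*k = 4*m := by omega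
      have e2 : 2*k+1 = 4*m+1 := by omega
      rw [e2, e1, h4 m hm1, h5 m hm1]; ring
    · have e1 : 2*k = 4*(m+1)-2 := by omega
      have e2 : 2*k+1 = 4*(m+1)-1 := by omega
      rw [e2, e1, h2 (m+1) (by omega), h3 (m+1) (by omega)]; ring
  -- product lemma
  have prod2 : ∀ n, 1 ≤ n → pa1 (2*n+2) * pa1 (2*n+1) = -(1/(a n * a (n+1))) := by
    intro n hn
    rcases Nat.even_or_odd n with ⟨m, hm⟩ | ⟨m, hm⟩
    · -- n = 2m, m ≥ 1
      have hm1 : 1 ≤ m := by omega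
      have e1 : 2*n+2 = 4*(m+1)-2 := by omega
      have e2 : 2*n+1 = 4*m+1 := by omega
      have e3 : 2*(m+1)-1 = 2*m+1 := by omega
      rw [e1, e2, h2 (m+1) (by omega), h5 m hm1, e3]
      have h1 : a (2*m) ≠ 0 := ha' _ (by omega)
      have h2' : a (2*m+1) ≠ 0 := ha' _ (by omega)
      have hnm : a n = a (2*m) := congrArg a (by omega)
      have hnm1 : a (n+1) = a (2*m+1) := congrArg a (by omega)
      rw [hnm, hnm1]
      field_simp
    · -- n = 2m+1
      have e1 : 2*n+2 = 4*(m+1) := by omega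
      have e2 : 2*n+1 = 4*(m+1)-1 := by omega
      have e3 : 2*(m+1)-1 = 2*m+1 := by omega
      have e4 : 2*(m+1) = 2*m+2 := by omega
      rw [e1, e2, h4 (m+1) (by omega), h3 (m+1) (by omega), e3, e4]
      have h1 : a (2*m+1) ≠ 0 := ha' _ (by omega)
      have h2' : a (2*m+2) ≠ 0 := ha' _ (by omega)
      have hnm : a n = a (2*m+1) := congrArg a (by omega)
      have hnm1 : a (n+1) = a (2*m+2) := congrArg a (by omega)
      rw [hnm, hnm1]
      field_simp
  -- even-index two-step recurrence
  have evenrec : ∀ (F : ℕ → ℝ),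
      (∀ k, F (k+2) = F (k+1) + pa1 (k+1) * F k) → ∀ n,
      F (2*n+4) = F (2*n+2) - pa1 (2*n+2) * pa1 (2*n+1) * F (2*n) := by
    intro F hF n
    have r3 : F (2*n+4) = F (2*n+3) + pa1 (2*n+3) * F (2*n+2) := hF (2*n+2)
    have r2 : F (2*n+3) = F (2*n+2) + pa1 (2*n+2) * F (2*n+1) := hF (2*n+1)
    have r1 : F (2*n+2) = F (2*n+1) + pa1 (2*n+1) * F (2*n) := hF (2*n)
    have hpair : pa1 (2*n+3) = -pa1 (2*n+2) := by
      have := pair (n+1) (by omega)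
      have e1 : 2*(n+1)+1 = 2*n+3 := by omega
      have e2 : 2*(n+1) = 2*n+2 := by omega
      rwa [e1, e2] at this
    have hF1 : F (2*n+1) = F (2*n+2) - pa1 (2*n+1) * F (2*n) := by rw [r1]; ring
    rw [r3, r2, hpair, hF1]; ring
  have hNrec : ∀ k, N (k+2) = N (k+1) + pa1 (k+1) * N k := by
    intro k
    have : N (k+2) = b1 (k+1) * N (k+1) + pa1 (k+1) * N k := rfl
    rw [this, hb1v]; ring
  have hDrec : ∀ k, D (k+2) = D (k+1) + pa1 (k+1) * D k := by
    intro k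
    have : D (k+2) = b1 (k+1) * D (k+1) + pa1 (k+1) * D k := rfl
    rw [this, hb1v]; ring
  have hPrec : ∀ k, P (k+2) = a (k+1) * P (k+1) + P k := by
    intro k
    have : P (k+2) = b3 (k+1) * P (k+1) + 1 * P k := rfl
    rw [this, hb3v]; ring
  have hQrec : ∀ k, Q (k+2) = a (k+1) * Q (k+1) + Q k := by
    intro k
    have : Q (k+2) = b3 (k+1) * Q (k+1) + 1 * Q k := rfl
    rw [this, hb3v]; ring
  -- positivity of Q
  have hQpos : ∀ n, 0 < Q (n+1) ∧ 0 < Q (n+2) := by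
    intro n
    induction n with
    | zero =>
      constructor
      · show (0:ℝ) < 1; norm_num
      · rw [hQrec 0]
        have : Q 1 = 1 := rfl
        have h0 : Q 0 = 0 := rfl
        rw [this, h0]
        simpa using ha 1 le_rfl
    | succ k ih =>
      refine ⟨ih.2, ?_⟩
      rw [hQrec (k+1)]
      have := ha (k+2) (by omega)
      nlinarith [ih.1, ih.2]
  -- products
  set E : ℕ → ℝ := fun n => ∏ k ∈ Finset.Icc 1 n, a k with hEdef
  have hE0 : E 0 = 1 := by simp [hEdef]
  have hEsucc : ∀ n, E (n+1) = E n * a (n+1) := by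
    intro n
    simp only [hEdef]
    rw [Finset.prod_Icc_succ_top (by omega)]
  have hEpos : ∀ n, 0 < E n := by
    intro n
    induction n with
    | zero => rw [hE0]; norm_num
    | succ k ih => rw [hEsucc]; exact mul_pos ih (ha _ (by omega))
  have hEne : ∀ n, E n ≠ 0 := fun n => (hEpos n).ne'
  -- main even-index identity
  have main : ∀ n, (D (2*n+2) = (E n)⁻¹ * Q (n+1) ∧
      N (2*n+2) = (E n)⁻¹ * (P (n+1) + Q (n+1)/p)) ∧
      (D (2*(n+1)+2) = (E (n+1))⁻¹ * Q (n+2) ∧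
      N (2*(n+1)+2) = (E (n+1))⁻¹ * (P (n+2) + Q (n+2)/p)) := by
    intro n
    induction n with
    | zero =>
      have hN1 : N 1 = 0 := by show b1 0 = 0; simp [hb1def]
      have hD1 : D 1 = 1 := rfl
      have hN2 : N 2 = 1/p := by
        show b1 1 * b1 0 + pa1 1 * 1 = 1/p
        rw [hb1v 0, h1]; simp [hb1def]
      have hD2 : D 2 = 1 := by
        show b1 1 * 1 + pa1 1 * 0 = 1
        rw [hb1v 0]; ring
      have hP1 : P 1 = 0 := by show b3 0 = 0; simp [hb3def]
      have hQ1 : Q 1 = 1 := rfl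
      have hP2 : P 2 = 1 := by
        show b3 1 * b3 0 + 1 * 1 = 1
        simp [hb3def]
      have hQ2 : Q 2 = a 1 := by
        show b3 1 * 1 + 1 * 0 = a 1
        rw [hb3v 0]; ring
      have hN3 : N 3 = 1/p := by rw [hNrec 1, hN2, hN1]; ring
      have hD3 : D 3 = 1 + pa1 2 := by rw [hDrec 1, hD2, hD1]; ring
      have hpa3 : pa1 3 = p / a 1 := by
        simpa using h3 1 le_rfl
      have hN4 : N 4 = 1/p + (p/a 1) * (1/p) := by
        rw [hNrec 2, hN3, hN2, hpa3]
      have hD4 : D 4 = 1 := by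
        have hpair : pa1 3 = -pa1 2 := by
          simpa using pair 1 le_rfl
        rw [hDrec 2, hD3, hD2, hpair]; ring
      have ha1 : a 1 ≠ 0 := ha' 1 le_rfl
      refine ⟨⟨?_, ?_⟩, ?_, ?_⟩
      · rw [hD2, hQ1, hE0]; norm_num
      · rw [hN2, hP1, hQ1, hE0]; norm_num
      · show D 4 = (E 1)⁻¹ * Q 2
        rw [hD4, hQ2, hEsucc 0, hE0]; field_simp
      · show N 4 = (E 1)⁻¹ * (P 2 + Q 2 / p)
        rw [hN4, hP2, hQ2, hEsucc 0, hE0]; field_simp; ring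
    | succ k ih =>
      obtain ⟨⟨hD1, hN1⟩, hD2, hN2⟩ := ih
      have hpr : pa1 (2*k+4) * pa1 (2*k+3) = -(1/(a (k+1) * a (k+2))) :=
        prod2 (k+1) (by omega)
      have h1' : a (k+1) ≠ 0 := ha' _ (by omega)
      have h2' : a (k+2) ≠ 0 := ha' _ (by omega)
      have hD2' : D (2*k+4) = (E (k+1))⁻¹ * Q (k+2) := hD2
      have hN2' : N (2*k+4) = (E (k+1))⁻¹ * (P (k+2) + Q (k+2)/p) := hN2
      have hD1' : D (2*k+2) = (E k)⁻¹ * Q (k+1) := hD1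
      have hN1' : N (2*k+2) = (E k)⁻¹ * (P (k+1) + Q (k+1)/p) := hN1
      have hQr : Q (k+3) = a (k+2) * Q (k+2) + Q (k+1) := hQrec (k+1)
      have hPr : P (k+3) = a (k+2) * P (k+2) + P (k+1) := hPrec (k+1)
      have hE1 : E (k+1) = E k * a (k+1) := hEsucc k
      have hE2 : E (k+2) = E k * a (k+1) * a (k+2) := by
        rw [hEsucc (k+1), hEsucc k]
      refine ⟨⟨hD2, hN2⟩, ?_, ?_⟩
      · show D (2*k+6) = (E (k+2))⁻¹ * Q (k+3)
        have hrec : D (2*k+6) = D (2*k+4) - pa1 (2*k+4) * pa1 (2*k+3) * D (2*k+2) :=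
          evenrec D hDrec (k+1)
        rw [hrec, hpr, hD2', hD1', hQr, hE2, hE1]
        have hEk := hEne k
        field_simp
        ring
      · show N (2*k+6) = (E (k+2))⁻¹ * (P (k+3) + Q (k+3)/p)
        have hrec : N (2*k+6) = N (2*k+4) - pa1 (2*k+4) * pa1 (2*k+3) * N (2*k+2) :=
          evenrec N hNrec (k+1)
        rw [hrec, hpr, hN2', hN1', hQr, hPr, hE2, hE1]
        have hEk := hEne k
        field_simp
        ring
  -- subsequence converging
  have hmono : Tendsto (fun n : ℕ => 2*n+1) atTop atTop :=
    tendsto_atTop_atTop.mpr fun b => ⟨b, fun n hn => by omega⟩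
  have hsub : Tendsto (fun n => N (2*n+2) / D (2*n+2)) atTop (𝓝 x) := by
    have hcomp := hx.comp hmono
    have : ((fun n => CFnum pa1 b1 (n+1) / CFden pa1 b1 (n+1)) ∘ fun n : ℕ => 2*n+1)
        = fun n => N (2*n+2) / D (2*n+2) := by
      funext n
      simp only [Function.comp]
      rfl
    rwa [this] at hcomp
  have hratio : ∀ n, P (n+1) / Q (n+1) = N (2*n+2) / D (2*n+2) - 1/p := by
    intro n
    obtain ⟨⟨hD1, hN1⟩, _⟩ := main n
    rw [hN1, hD1]
    have hQne : Q (n+1) ≠ 0 := (hQpos n).1.ne'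
    have hEne' : (E n)⁻¹ ≠ 0 := inv_ne_zero (hEne n)
    rw [mul_div_mul_left _ _ hEne']
    field_simp
    ring
  have hPQ : Tendsto (fun n => P (n+1) / Q (n+1)) atTop (𝓝 (x - 1/p)) := by
    have : (fun n => P (n+1) / Q (n+1)) = fun n => N (2*n+2) / D (2*n+2) - 1/p := by
      funext n; exact hratio n
    rw [this]
    exact hsub.sub_const (1/p)
  -- equivalence transformation: CF2 has the same convergents as CF1
  have pb2ne : ∀ k, 1 ≤ k → pb2 k ≠ 0 := by
    intro k hk
    have hm : k % 4 = 0 ∨ k % 4 = 1 ∨ k % 4 = 2 ∨ k % 4 = 3 := by omega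
    rcases hm with h | h | h | h
    · rw [hq4 k hk h]
      exact ha' _ (by omega)
    · rw [hq1 k h]; exact hp
    · rw [hq2 k hk h]
      have := ha' (k/2) (by omega)
      simp only [neg_ne_zero]
      positivity
    · rw [hq3 k h]; simpa using hp
  have key : ∀ k, pb2 (k+2) * pb2 (k+1) * pa1 (k+2) = 1 := by
    intro k
    have hm : (k+2) % 4 = 0 ∨ (k+2) % 4 = 1 ∨ (k+2) % 4 = 2 ∨ (k+2) % 4 = 3 := by omega
    have hdm := Nat.div_add_mod (k+2) 4
    set q := (k+2)/4 with hq
    rcases hm with h | h | h | h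
    · -- k+2 = 4q, q ≥ 1
      have hk2 : k+2 = 4*q := by omega
      have hq1' : 1 ≤ q := by omega
      have e1 : k+1 = 4*q - 1 := by omega
      have v1 : pb2 (k+2) = a (2*q) := by
        rw [hq4 (k+2) (by omega) h]
        congr 1; omega
      have v2 : pb2 (k+1) = -p := by
        apply hq3; omega
      have v3 : pa1 (k+2) = -(1/(p * a (2*q))) := by
        rw [hk2]; exact h4 q hq1'
      rw [v1, v2, v3]
      have hAne := ha' (2*q) (by omega)
      set A := a (2*q) with hA
      field_simp
    · -- k+2 = 4q+1, q ≥ 1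
      have hk2 : k+2 = 4*q+1 := by omega
      have hq1' : 1 ≤ q := by omega
      have v1 : pb2 (k+2) = p := hq1 (k+2) h
      have v2 : pb2 (k+1) = a (2*q) := by
        rw [hq4 (k+1) (by omega) (by omega)]
        congr 1; omega
      have v3 : pa1 (k+2) = 1/(p * a (2*q)) := by
        rw [hk2]; exact h5 q hq1'
      rw [v1, v2, v3]
      have hAne := ha' (2*q) (by omega)
      set A := a (2*q) with hA
      field_simp
    · -- k+2 = 4q+2 = 4(q+1)-2
      have hk2 : k+2 = 4*q+2 := by omega
      have v1 : pb2 (k+2) = -(a (2*q+1) / p^2) := by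
        rw [hq2 (k+2) (by omega) h]
        have ed : (k+2)/2 = 2*q+1 := by omega
        rw [ed]
      have v2 : pb2 (k+1) = p := hq1 (k+1) (by omega)
      have v3 : pa1 (k+2) = -(p / a (2*q+1)) := by
        have := h2 (q+1) (by omega)
        have e : 4*(q+1)-2 = k+2 := by omega
        have e2 : 2*(q+1)-1 = 2*q+1 := by omega
        rw [e, e2] at this; exact this
      rw [v1, v2, v3]
      have hAne := ha' (2*q+1) (by omega)
      set A := a (2*q+1) with hA
      field_simp
    · -- k+2 = 4q+3 = 4(q+1)-1
      have hk2 : k+2 = 4*q+3 := by omega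
      have v1 : pb2 (k+2) = -p := hq3 (k+2) h
      have v2 : pb2 (k+1) = -(a (2*q+1) / p^2) := by
        rw [hq2 (k+1) (by omega) (by omega)]
        have ed : (k+1)/2 = 2*q+1 := by omega
        rw [ed]
      have v3 : pa1 (k+2) = p / a (2*q+1) := by
        have := h3 (q+1) (by omega)
        have e : 4*(q+1)-1 = k+2 := by omega
        have e2 : 2*(q+1)-1 = 2*q+1 := by omega
        rw [e, e2] at this; exact this
      rw [v1, v2, v3]
      have hAne := ha' (2*q+1) (by omega)
      set A := a (2*q+1) with hA
      field_simp
  set c : ℕ → ℝ := fun n => ∏ k ∈ Finset.Icc 1 n, pb2 k with hcdef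
  have hc0 : c 0 = 1 := by simp [hcdef]
  have hcsucc : ∀ n, c (n+1) = c n * pb2 (n+1) := by
    intro n
    simp only [hcdef]
    rw [Finset.prod_Icc_succ_top (by omega)]
  have hcne : ∀ n, c n ≠ 0 := by
    intro n
    induction n with
    | zero => rw [hc0]; norm_num
    | succ k ih => rw [hcsucc]; exact mul_ne_zero ih (pb2ne _ (by omega))
  set N2 : ℕ → ℝ := CFnum (fun _ => 1) pb2 with hN2def
  set D2 : ℕ → ℝ := CFden (fun _ => 1) pb2 with hD2def
  have hN2rec : ∀ k, N2 (k+2) = pb2 (k+1) * N2 (k+1) + N2 k := by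
    intro k
    have : N2 (k+2) = pb2 (k+1) * N2 (k+1) + 1 * N2 k := rfl
    rw [this]; ring
  have hD2rec : ∀ k, D2 (k+2) = pb2 (k+1) * D2 (k+1) + D2 k := by
    intro k
    have : D2 (k+2) = pb2 (k+1) * D2 (k+1) + 1 * D2 k := rfl
    rw [this]; ring
  have equiv : ∀ n, (N2 (n+1) = c n * N (n+1) ∧ D2 (n+1) = c n * D (n+1)) ∧
      (N2 (n+2) = c (n+1) * N (n+2) ∧ D2 (n+2) = c (n+1) * D (n+2)) := by
    intro n
    induction n with
    | zero =>
      have hp1 : pb2 1 = p := hq1 1 (by norm_num)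
      have hN21 : N2 1 = 0 := by show pb2 0 = 0; exact hpb2_0
      have hD21 : D2 1 = 1 := rfl
      have hN22 : N2 2 = 1 := by
        show pb2 1 * pb2 0 + 1 * 1 = 1
        rw [hp1, hpb2_0]; ring
      have hD22 : D2 2 = p := by
        show pb2 1 * 1 + 1 * 0 = p
        rw [hp1]; ring
      have hN1 : N 1 = 0 := by show b1 0 = 0; simp [hb1def]
      have hD1 : D 1 = 1 := rfl
      have hN2' : N 2 = 1/p := by
        show b1 1 * b1 0 + pa1 1 * 1 = 1/p
        rw [hb1v 0, h1]; simp [hb1def]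
      have hD2' : D 2 = 1 := by
        show b1 1 * 1 + pa1 1 * 0 = 1
        rw [hb1v 0]; ring
      refine ⟨⟨?_, ?_⟩, ?_, ?_⟩
      · rw [hN21, hN1, hc0]; ring
      · rw [hD21, hD1, hc0]; ring
      · rw [hN22, hN2', hcsucc 0, hc0, hp1]; field_simp
      · rw [hD22, hD2', hcsucc 0, hc0, hp1]; ring
    | succ k ih =>
      obtain ⟨⟨hNk, hDk⟩, hNk1, hDk1⟩ := ih
      refine ⟨⟨hNk1, hDk1⟩, ?_, ?_⟩
      · rw [hN2rec (k+1), hNk1, hNk]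
        have hNr : N (k+3) = N (k+2) + pa1 (k+2) * N (k+1) := hNrec (k+1)
        rw [hNr, hcsucc (k+1)]
        have hk := key k
        have : c k = c (k+2) * pa1 (k+2) := by
          rw [hcsucc (k+1), hcsucc k]
          calc c k = c k * (pb2 (k+2) * pb2 (k+1) * pa1 (k+2)) := by rw [hk]; ring
          _ = c k * pb2 (k+1) * pb2 (k+2) * pa1 (k+2) := by ring
        rw [this, hcsucc (k+1)]
        ring
      · rw [hD2rec (k+1), hDk1, hDk]
        have hDr : D (k+3) = D (k+2) + pa1 (k+2) * D (k+1) := hDrec (k+1)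
        rw [hDr, hcsucc (k+1)]
        have hk := key k
        have : c k = c (k+2) * pa1 (k+2) := by
          rw [hcsucc (k+1), hcsucc k]
          calc c k = c k * (pb2 (k+2) * pb2 (k+1) * pa1 (k+2)) := by rw [hk]; ring
          _ = c k * pb2 (k+1) * pb2 (k+2) * pa1 (k+2) := by ring
        rw [this, hcsucc (k+1)]
        ring
  have hCF2 : Tendsto (fun n => N2 (n+1) / D2 (n+1)) atTop (𝓝 x) := by
    have heq : (fun n => N2 (n+1) / D2 (n+1)) = fun n => N (n+1) / D (n+1) := by
      funext n
      obtain ⟨⟨hN', hD'⟩, _⟩ := equiv n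
      rw [hN', hD', mul_div_mul_left _ _ (hcne n)]
    rw [heq]
    exact hx
  refine ⟨x - 1/p, hPQ, ?_⟩
  have : 1/p + (x - 1/p) = x := by ring
  rw [CFConvTo, this]
  exact hCF2
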